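/- For all x in (0, π/2), 2·(sin x)/x + (tan x)/x > 2·x/(sin x) + x/(tan x). -/

import Mathlib

open Real

lemma aux_sin_lb : ∀ x : ℝ, 0 ≤ x → x - x ^ 3 / 6 ≤ Real.sin x := by
  have hd : ∀ t : ℝ, HasDerivAt (fun t => Real.sin t - t + t ^ 3 / 6)
      (Real.cos t - 1 + t ^ 2 / 2) t := by
    intro t
    have h := ((Real.hasDerivAt_sin t).sub (hasDerivAt_id t)).add
      ((hasDerivAt_pow 3 t).div_const 6)
    refine h.congr_deriv ?_
    push_cast
    ring
  have hmono : Monotone (fun t => Real.sin t - t + t ^ 3 / 6) := by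
    apply monotone_of_deriv_nonneg
    · exact fun t => (hd t).differentiableAt
    · intro t
      rw [(hd t).deriv]
      have := Real.one_sub_sq_div_two_le_cos (x := t)
      linarith
  intro x hx
  have := hmono hx
  simp only [Real.sin_zero] at this
  nlinarith [this]

lemma aux_cos_ub : ∀ x : ℝ, 0 ≤ x → Real.cos x ≤ 1 - x ^ 2 / 2 + x ^ 4 / 24 := by
  have hd : ∀ t : ℝ, HasDerivAt (fun t => 1 - t ^ 2 / 2 + t ^ 4 / 24 - Real.cos t)
      (Real.sin t - t + t ^ 3 / 6) t := by
    intro t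
    have h := ((((hasDerivAt_const t (1:ℝ)).sub ((hasDerivAt_pow 2 t).div_const 2)).add
      ((hasDerivAt_pow 4 t).div_const 24)).sub (Real.hasDerivAt_cos t))
    refine h.congr_deriv ?_
    push_cast
    ring
  have hmono : MonotoneOn (fun t => 1 - t ^ 2 / 2 + t ^ 4 / 24 - Real.cos t) (Set.Ici 0) := by
    apply monotoneOn_of_deriv_nonneg (convex_Ici 0)
    · exact Continuous.continuousOn (by continuity)
    · intro t _
      exact (hd t).differentiableAt.differentiableWithinAt
    · intro t ht
      rw [interior_Ici] at ht
      rw [(hd t).deriv]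
      have := aux_sin_lb t (le_of_lt ht)
      linarith
  intro x hx
  have := hmono (Set.self_mem_Ici) hx hx
  simp only [Real.cos_zero] at this
  nlinarith [this]

theorem refined_huygens_circular_first (x : ℝ) (hx : 0 < x) (hx2 : x < Real.pi / 2) :
    2 * (Real.sin x / x) + Real.tan x / x > 2 * (x / Real.sin x) + x / Real.tan x := by
  have hpi : Real.pi < 3.15 := Real.pi_lt_d2
  have hx16 : x < 1.575 := by linarith
  have hs : 0 < Real.sin x := Real.sin_pos_of_pos_of_lt_pi hx (by nlinarith [Real.pi_gt_three])
  have hc : 0 < Real.cos x := Real.cos_pos_of_mem_Ioo ⟨by linarith, hx2⟩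
  have hc1 : Real.cos x ≤ 1 := Real.cos_le_one x
  -- key: sin x ^ 3 > x ^ 3 * cos x
  have h1 : x - x ^ 3 / 6 ≤ Real.sin x := aux_sin_lb x hx.le
  have h2 : Real.cos x ≤ 1 - x ^ 2 / 2 + x ^ 4 / 24 := aux_cos_ub x hx.le
  have hxpos : 0 < x - x ^ 3 / 6 := by nlinarith
  have hcube : x ^ 3 * Real.cos x < Real.sin x ^ 3 := by
    have h3 : (x - x ^ 3 / 6) ^ 3 ≤ Real.sin x ^ 3 := by
      exact pow_le_pow_left₀ hxpos.le h1 3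
    have hA : x ^ 3 * Real.cos x ≤ x ^ 3 * (1 - x ^ 2 / 2 + x ^ 4 / 24) :=
      mul_le_mul_of_nonneg_left h2 (by positivity)
    have hC : 0 < x ^ 7 * (9 - x ^ 2) := mul_pos (pow_pos hx 7) (by nlinarith)
    nlinarith [hA, hC, h3]
  -- cube root of cos x
  set c := Real.cos x with hcdef
  set y := c ^ ((1 : ℝ) / 3) with hydef
  have hy_pos : 0 < y := Real.rpow_pos_of_pos hc _
  have hy3 : y ^ 3 = c := by
    rw [hydef, ← Real.rpow_natCast (c ^ ((1:ℝ)/3)) 3, ← Real.rpow_mul hc.le]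
    norm_num
  have hy_le : y ≤ 1 := Real.rpow_le_one hc.le hc1 (by norm_num)
  have hxy : x * y < Real.sin x := by
    apply lt_of_pow_lt_pow_left₀ 3 hs.le
    calc (x * y) ^ 3 = x ^ 3 * c := by rw [mul_pow, hy3]
    _ < Real.sin x ^ 3 := hcube
  have hs2 : x ^ 2 * y ^ 2 < Real.sin x ^ 2 := by
    have := pow_lt_pow_left₀ hxy (by positivity : (0:ℝ) ≤ x * y) two_ne_zero
    calc x ^ 2 * y ^ 2 = (x * y) ^ 2 := by ring
    _ < Real.sin x ^ 2 := this
  have hpoly : c * (2 + c) ≤ y ^ 2 * (2 * c + 1) := by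
    have h5 : 0 ≤ y ^ 2 * (1 - y) ^ 3 * (y + 1) := by
      apply mul_nonneg (mul_nonneg (sq_nonneg y) (pow_nonneg (by linarith) 3))
      linarith
    nlinarith [hy3]
  have key : x ^ 2 * (c * (2 + c)) < Real.sin x ^ 2 * (2 * c + 1) := by
    calc x ^ 2 * (c * (2 + c)) ≤ x ^ 2 * (y ^ 2 * (2 * c + 1)) := by
          apply mul_le_mul_of_nonneg_left hpoly (by positivity)
    _ = (x ^ 2 * y ^ 2) * (2 * c + 1) := by ring
    _ < Real.sin x ^ 2 * (2 * c + 1) := by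
          apply mul_lt_mul_of_pos_right hs2 (by linarith)
  rw [Real.tan_eq_sin_div_cos, gt_iff_lt, ← sub_pos]
  have heq : 2 * (Real.sin x / x) + Real.sin x / c / x - (2 * (x / Real.sin x) + x / (Real.sin x / c))
      = (Real.sin x ^ 2 * (2 * c + 1) - x ^ 2 * (c * (2 + c))) / (x * Real.sin x * c) := by
    field_simp
  rw [heq]
  apply div_pos (by linarith) (by positivity)
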